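/- Let g : ℝⁿ → ℝⁿ be the piecewise-linear map g(x) = A_L x + bμ if x₁ ≤ 0 and g(x) = A_R x + bμ if x₁ ≥ 0, where A_L and A_R agree in all columns except possibly the first. Let pᵀ = e₁ᵀ adj(I - A_L) and s = pᵀ b μ. If det(I - A_L) > 0, det(I - A_R) < 0, and s > 0, then for every x ∈ ℝⁿ, pᵀ g(x) ≥ pᵀ x + s. -/

import Mathlib

open Matrix

lemma adj_row_dot_mulVec {m : ℕ} (M : Matrix (Fin (m+1)) (Fin (m+1)) ℝ)
    (x : Fin (m+1) → ℝ) :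
    (adjugate M 0) ⬝ᵥ M.mulVec x = M.det * x 0 := by
  rw [dotProduct_mulVec]
  have h : (adjugate M 0) ᵥ* M = (adjugate M * M) 0 := rfl
  rw [h, adjugate_mul]
  simp [dotProduct, Matrix.one_apply, ite_mul, mul_ite]

/-- If `det(I - A_L) > 0`, `det(I - A_R) < 0`, and `s = pᵀ b μ > 0`, then the
piecewise-linear map `g` satisfies `pᵀ g(x) ≥ pᵀ x + s` for all `x`. -/
theorem pwl_map_increase (n : ℕ) (AL AR : Matrix (Fin (n+1)) (Fin (n+1)) ℝ)
    (hcols : ∀ j : Fin (n+1), j ≠ 0 → (fun i => AL i j) = (fun i => AR i j))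
    (b : Fin (n+1) → ℝ) (μ : ℝ)
    (g : (Fin (n+1) → ℝ) → (Fin (n+1) → ℝ))
    (hg : ∀ x, g x = if x 0 ≤ 0 then AL.mulVec x + μ • b else AR.mulVec x + μ • b)
    (p : Fin (n+1) → ℝ) (hp : p = (adjugate (1 - AL)) 0)
    (s : ℝ) (hs : s = (p ⬝ᵥ b) * μ)
    (hdetL : 0 < (1 - AL).det) (hdetR : (1 - AR).det < 0) (hspos : 0 < s) :
    ∀ x, p ⬝ᵥ g x ≥ p ⬝ᵥ x + s := by
  intro x
  set u : Fin (n+1) → ℝ := fun i => AL i 0 - AR i 0 with hu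
  -- p dot b μ = s
  have hsb : p ⬝ᵥ (μ • b) = s := by
    rw [hs, dotProduct_smul]; ring_nf
  -- key for L
  have hL : ∀ y : Fin (n+1) → ℝ, p ⬝ᵥ AL.mulVec y = p ⬝ᵥ y - (1 - AL).det * y 0 := by
    intro y
    have := adj_row_dot_mulVec (1 - AL) y
    rw [← hp] at this
    have h2 : (1 - AL).mulVec y = y - AL.mulVec y := by
      simp [sub_mulVec]
    rw [h2, dotProduct_sub] at this
    linarith
  -- AR mulVec in terms of AL
  have hARmul : ∀ y : Fin (n+1) → ℝ, AR.mulVec y = AL.mulVec y - y 0 • u := by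
    intro y
    funext i
    have : ∀ j : Fin (n+1), AL i j * y j - AR i j * y j
        = if j = 0 then u i * y 0 else 0 := by
      intro j
      by_cases hj : j = 0
      · subst hj; simp only [if_true, hu]; ring
      · have := congrFun (hcols j hj) i
        simp [hj, this]
    simp only [mulVec, dotProduct, Pi.sub_apply, Pi.smul_apply, smul_eq_mul]
    have hsum : (∑ j, AL i j * y j) - (∑ j, AR i j * y j)
        = ∑ j, (AL i j * y j - AR i j * y j) := by
      rw [Finset.sum_sub_distrib]
    have : (∑ j, AL i j * y j) - (∑ j, AR i j * y j) = u i * y 0 := by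
      rw [hsum]
      simp only [this]
      simp
    linarith [this]
  have hdet : (1 - AR).det = (1 - AL).det + p ⬝ᵥ u := by
    have hcol : (1 - AR) = (1 - AL).updateCol 0 (fun i => (1 - AL) i 0 + u i) := by
      ext i j
      by_cases hj : j = 0
      · subst hj; simp [updateCol_apply, hu]; try ring
      · have := congrFun (hcols j hj) i
        simp [updateCol_apply, hj, this]
    have hfun : (fun i => (1 - AL) i 0 + u i) = (fun i => (1 - AL) i 0) + u := rfl
    rw [hcol, hfun, det_updateCol_add, updateCol_eq_self]
    congr 1
    · have : ((1 - AL).updateCol 0 u).det = cramer (1 - AL) u 0 := by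
        rw [cramer_apply]
      rw [this, cramer_eq_adjugate_mulVec]
      rw [hp]
      simp [mulVec, dotProduct]
  have hRkey : ∀ y : Fin (n+1) → ℝ, p ⬝ᵥ AR.mulVec y = p ⬝ᵥ y - (1 - AR).det * y 0 := by
    intro y
    rw [hARmul y, dotProduct_sub, hL y, dotProduct_smul, hdet]
    simp [smul_eq_mul]
    ring
  rw [hg x]
  by_cases hx0 : x 0 ≤ 0
  · simp only [hx0, if_true, dotProduct_add, hL x, hsb]
    nlinarith
  · simp only [hx0, if_false, dotProduct_add, hRkey x, hsb]
    push_neg at hx0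
    nlinarith
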